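/- For every integer n ≥ 1, every tuple (k_1,…,k_n) of positive integers, and every integer N ≥ 0, the Lebesgue measure of {x ∈ E(k_1,…,k_n) : u_{n+1}(x) ≥ N+1} is strictly greater than μ(E(k_1,…,k_n)) / (3(N+2)). -/

import Mathlib

open MeasureTheory

/-- The Gauss map `y ↦ {1/y}`. -/
noncomputable def gaussMap (y : ℝ) : ℝ := Int.fract y⁻¹

/-- For an irrational `x ∈ (0,1)`, `cfCoeff x n` is the `n`-th coefficient `u_n(x)`
(`n ≥ 1`) of the continued fraction expansion `x = [0; u_1(x), u_2(x), …]`. -/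
noncomputable def cfCoeff (x : ℝ) (n : ℕ) : ℕ := ⌊(gaussMap^[n - 1] x)⁻¹⌋₊

/-- The cylinder set `E(k_1,…,k_N)` of irrational `x ∈ (0,1)` whose first `N`
continued fraction coefficients are `k_1, …, k_N`. -/
def cyl (N : ℕ) (k : ℕ → ℕ) : Set ℝ :=
  {x | x ∈ Set.Ioo (0 : ℝ) 1 ∧ Irrational x ∧ ∀ j, 1 ≤ j → j ≤ N → cfCoeff x j = k j}


lemma rat_mobius (a b c d : ℚ) {t : ℝ} (ht : ¬ Irrational t) :
    ¬ Irrational (((a:ℝ) + b * t) / ((c:ℝ) + d * t)) := by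
  rw [Irrational, not_not] at ht ⊢
  obtain ⟨r, rfl⟩ := ht
  exact ⟨(a + b * r) / (c + d * r), by push_cast; ring⟩

lemma irr_G (p p' q q' : ℕ)
    (hdet : (p:ℤ) * q' - p' * q = 1 ∨ (p:ℤ) * q' - p' * q = -1)
    {t : ℝ} (ht : Irrational t) (hden : ((q:ℝ) + q' * t) ≠ 0) :
    Irrational (((p:ℝ) + p' * t) / ((q:ℝ) + q' * t)) := by
  by_contra h
  rw [Irrational, not_not] at h
  obtain ⟨r, hr⟩ := h
  have key : (p:ℝ) + p' * t = r * ((q:ℝ) + q' * t) := (div_eq_iff hden).mp hr.symm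
  have h2 : t * ((p':ℝ) - r * q') = r * q - p := by linear_combination key
  by_cases hc : (p':ℝ) - r * q' = 0
  · have h3 : (r:ℝ) * q = p := by
      have := h2; rw [hc, mul_zero] at this; linarith
    have hz : (p:ℝ) * q' - p' * q = 0 := by
      have hp' : (p':ℝ) = r * q' := by linarith
      rw [hp', ← h3]; ring
    rcases hdet with hd | hd <;>
      · have := congrArg (Int.cast : ℤ → ℝ) hd
        push_cast at this
        linarith
  · have hteq : t = ((r:ℝ) * q - p) / ((p':ℝ) - r * q') := by
      rw [eq_div_iff hc]; exact h2
    refine ht ⟨(r * (q:ℚ) - p) / ((p':ℚ) - r * q'), ?_⟩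
    rw [hteq]; push_cast; ring


lemma cfCoeff_succ (x : ℝ) (j : ℕ) (hj : 1 ≤ j) :
    cfCoeff x (j + 1) = cfCoeff (gaussMap x) j := by
  obtain ⟨m, rfl⟩ := Nat.exists_eq_add_of_le hj
  simp only [cfCoeff, Nat.add_sub_cancel, Nat.succ_sub_one]
  rw [show 1 + m = m + 1 by ring, Nat.add_sub_cancel, Function.iterate_succ_apply]

lemma gauss_basic {x : ℝ} (hx : x ∈ Set.Ioo (0:ℝ) 1) (hirr : Irrational x) :
    gaussMap x ∈ Set.Ioo (0:ℝ) 1 ∧ Irrational (gaussMap x) ∧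
      x⁻¹ = (cfCoeff x 1 : ℝ) + gaussMap x ∧ 1 ≤ cfCoeff x 1 := by
  obtain ⟨hx0, hx1⟩ := hx
  have hinv1 : 1 < x⁻¹ := (one_lt_inv₀ hx0).2 hx1
  have hinv0 : (0:ℝ) ≤ x⁻¹ := by linarith
  have hgM : gaussMap x = x⁻¹ - ⌊x⁻¹⌋ := (Int.self_sub_floor x⁻¹).symm
  have hirr' : Irrational x⁻¹ := hirr.inv
  have hgirr : Irrational (gaussMap x) := by rw [hgM]; exact hirr'.sub_intCast _
  have hg0 : 0 < gaussMap x := by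
    rcases lt_or_eq_of_le (Int.fract_nonneg x⁻¹) with h | h
    · exact h
    · exfalso
      have h' : gaussMap x = 0 := h.symm
      rw [hgM] at h'
      have : x⁻¹ = (⌊x⁻¹⌋ : ℝ) := by linarith
      exact hirr'.ne_int _ this
  have hg1 : gaussMap x < 1 := Int.fract_lt_one x⁻¹
  have hfloor : ((⌊x⁻¹⌋₊ : ℤ) : ℝ) = (⌊x⁻¹⌋ : ℝ) := by
    rw [Int.natCast_floor_eq_floor hinv0]
  have hcf : (cfCoeff x 1 : ℝ) = (⌊x⁻¹⌋ : ℝ) := by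
    simp only [cfCoeff, Nat.sub_self, Function.iterate_zero, id_eq]
    exact_mod_cast hfloor
  refine ⟨⟨hg0, hg1⟩, hgirr, by rw [hcf, hgM]; ring, ?_⟩
  have : (1:ℝ) ≤ x⁻¹ := le_of_lt hinv1
  simp only [cfCoeff, Nat.sub_self, Function.iterate_zero, id_eq]
  exact Nat.le_floor (by exact_mod_cast this)

lemma inv_step {y : ℝ} (k1 : ℕ) (hk1 : 1 ≤ k1) (hy : y ∈ Set.Ioo (0:ℝ) 1)
    (hirr : Irrational y) :
    ((k1:ℝ) + y)⁻¹ ∈ Set.Ioo (0:ℝ) 1 ∧ Irrational ((k1:ℝ) + y)⁻¹ ∧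
      cfCoeff ((k1:ℝ) + y)⁻¹ 1 = k1 ∧ gaussMap ((k1:ℝ) + y)⁻¹ = y := by
  obtain ⟨hy0, hy1⟩ := hy
  have hk1R : (1:ℝ) ≤ k1 := by exact_mod_cast hk1
  have hs1 : 1 < (k1:ℝ) + y := by linarith
  have hs0 : 0 < (k1:ℝ) + y := by linarith
  have hxmem : ((k1:ℝ) + y)⁻¹ ∈ Set.Ioo (0:ℝ) 1 :=
    ⟨inv_pos.2 hs0, (inv_lt_one₀ hs0).2 hs1⟩
  have hsirr : Irrational ((k1:ℝ) + y) := hirr.natCast_add k1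
  have hinvinv : (((k1:ℝ) + y)⁻¹)⁻¹ = (k1:ℝ) + y := inv_inv _
  refine ⟨hxmem, hsirr.inv, ?_, ?_⟩
  · simp only [cfCoeff, Nat.sub_self, Function.iterate_zero, id_eq, hinvinv]
    rw [Nat.floor_eq_iff (by positivity)]
    constructor
    · linarith
    · push_cast; linarith
  · show Int.fract (((k1:ℝ) + y)⁻¹)⁻¹ = y
    rw [hinvinv, Int.fract_natCast_add, Int.fract_eq_self.2 ⟨hy0.le, hy1⟩]

lemma algebra_step (k1 P P' Q Q' : ℕ) {t : ℝ} (ht0 : 0 < t) (hQ1 : 1 ≤ Q) :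
    ((Q:ℝ) + Q' * t) / (((k1 * Q + P : ℕ):ℝ) + ((k1 * Q' + P' : ℕ):ℝ) * t)
      = ((k1:ℝ) + ((P:ℝ) + P' * t) / ((Q:ℝ) + Q' * t))⁻¹ := by
  have h1 : (1:ℝ) ≤ (Q:ℝ) := by exact_mod_cast hQ1
  have hD1 : (0:ℝ) < (Q:ℝ) + Q' * t := by
    nlinarith [mul_nonneg (Nat.cast_nonneg Q' : (0:ℝ) ≤ Q') ht0.le]
  have hsum : (k1:ℝ) + ((P:ℝ) + P' * t) / ((Q:ℝ) + Q' * t)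
      = (((k1 * Q + P : ℕ):ℝ) + ((k1 * Q' + P' : ℕ):ℝ) * t) / ((Q:ℝ) + Q' * t) := by
    push_cast
    field_simp
    ring
  rw [hsum, inv_div]

lemma cyl_struct (n : ℕ) (hn : 1 ≤ n) (k : ℕ → ℕ)
    (hk : ∀ j, 1 ≤ j → j ≤ n → 1 ≤ k j) :
    ∃ p p' q q' : ℕ, 1 ≤ q' ∧ q' ≤ q ∧ p' ≤ p ∧
      ((p:ℤ) * q' - p' * q = 1 ∨ (p:ℤ) * q' - p' * q = -1) ∧
      (∀ t : ℝ, t ∈ Set.Ioo (0:ℝ) 1 → Irrational t →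
        ((p:ℝ) + p' * t) / ((q:ℝ) + q' * t) ∈ cyl n k ∧
        gaussMap^[n] (((p:ℝ) + p' * t) / ((q:ℝ) + q' * t)) = t) ∧
      (∀ x : ℝ, x ∈ cyl n k → ∃ t : ℝ, t ∈ Set.Ioo (0:ℝ) 1 ∧ Irrational t ∧
        gaussMap^[n] x = t ∧ x = ((p:ℝ) + p' * t) / ((q:ℝ) + q' * t)) := by
  induction n, hn using Nat.le_induction generalizing k with
  | base =>
    have hk1 : 1 ≤ k 1 := hk 1 le_rfl le_rfl
    refine ⟨1, 0, k 1, 1, le_rfl, hk1, Nat.zero_le _, Or.inl (by push_cast; ring), ?_, ?_⟩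
    · intro t ht htirr
      have hform : ((1:ℕ):ℝ) + (0:ℕ) * t = 1 := by push_cast; ring
      have hform2 : ((k 1 : ℕ):ℝ) + (1:ℕ) * t = (k 1 : ℝ) + t := by push_cast; ring
      have hx : (((1:ℕ):ℝ) + (0:ℕ) * t) / (((k 1:ℕ):ℝ) + (1:ℕ) * t) = ((k 1:ℝ) + t)⁻¹ := by
        rw [hform, hform2, one_div]
      obtain ⟨hmem, hirr, hcf, hg⟩ := inv_step (k 1) hk1 ht htirr
      rw [hx]
      refine ⟨⟨hmem, hirr, ?_⟩, ?_⟩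
      · intro j hj1 hj2
        have : j = 1 := le_antisymm hj2 hj1
        rw [this]; exact hcf
      · rw [Function.iterate_one]; exact hg
    · intro x hx
      obtain ⟨hmem, hirr, hcf⟩ := hx
      obtain ⟨hgmem, hgirr, hrel, _⟩ := gauss_basic hmem hirr
      refine ⟨gaussMap x, hgmem, hgirr, by rw [Function.iterate_one], ?_⟩
      have hcf1 : cfCoeff x 1 = k 1 := hcf 1 le_rfl le_rfl
      rw [hcf1] at hrel
      have hxne : x ≠ 0 := ne_of_gt hmem.1
      have hx' : (((1:ℕ):ℝ) + (0:ℕ) * gaussMap x) / (((k 1:ℕ):ℝ) + (1:ℕ) * gaussMap x)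
          = ((k 1:ℝ) + gaussMap x)⁻¹ := by
        push_cast; rw [zero_mul, add_zero, one_mul, one_div]
      rw [hx', ← hrel, inv_inv]
  | succ n hn ih =>
    have hk1 : 1 ≤ k 1 := hk 1 le_rfl (by omega)
    obtain ⟨P, P', Q, Q', hQ'1, hQ'Q, hP'P, hdet, hfwd, hbwd⟩ :=
      ih (fun j => k (j + 1)) (fun j hj1 hj2 => hk (j + 1) (by omega) (by omega))
    have hQ1 : 1 ≤ Q := le_trans hQ'1 hQ'Q
    refine ⟨Q, Q', k 1 * Q + P, k 1 * Q' + P', ?_, ?_, hQ'Q, ?_, ?_, ?_⟩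
    · calc 1 = 1 * 1 := rfl
        _ ≤ k 1 * Q' := Nat.mul_le_mul hk1 hQ'1
        _ ≤ k 1 * Q' + P' := Nat.le_add_right _ _
    · exact Nat.add_le_add (Nat.mul_le_mul_left _ hQ'Q) hP'P
    · rcases hdet with hd | hd
      · right; push_cast; linear_combination -hd
      · left; push_cast; linear_combination -hd
    · intro t ht htirr
      obtain ⟨hymem, hgy⟩ := hfwd t ht htirr
      obtain ⟨hyIoo, hyirr, hycf⟩ := hymem
      rw [algebra_step (k 1) P P' Q Q' ht.1 hQ1]
      obtain ⟨hxmem, hxirr, hxcf, hxg⟩ := inv_step (k 1) hk1 hyIoo hyirr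
      refine ⟨⟨hxmem, hxirr, ?_⟩, ?_⟩
      · intro j hj1 hj2
        by_cases hj : j = 1
        · rw [hj]; exact hxcf
        · obtain ⟨m, rfl⟩ : ∃ m, j = m + 1 := ⟨j - 1, by omega⟩
          rw [cfCoeff_succ _ m (by omega), hxg]
          exact hycf m (by omega) (by omega)
      · rw [Function.iterate_succ_apply, hxg]; exact hgy
    · intro x hx
      obtain ⟨hmem, hirr, hcf⟩ := hx
      obtain ⟨hgmem, hgirr, hrel, _⟩ := gauss_basic hmem hirr
      have hcf1 : cfCoeff x 1 = k 1 := hcf 1 le_rfl (by omega)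
      rw [hcf1] at hrel
      have hycyl : gaussMap x ∈ cyl n (fun j => k (j + 1)) := by
        refine ⟨hgmem, hgirr, fun j hj1 hj2 => ?_⟩
        rw [← cfCoeff_succ x j hj1]
        exact hcf (j + 1) (by omega) (by omega)
      obtain ⟨t, htmem, htirr, hgyt, hyform⟩ := hbwd (gaussMap x) hycyl
      refine ⟨t, htmem, htirr, ?_, ?_⟩
      · rw [Function.iterate_succ_apply]; exact hgyt
      · rw [algebra_step (k 1) P P' Q Q' htmem.1 hQ1, ← hyform, ← hrel, inv_inv]

lemma vol_image (p p' q q' : ℕ) (hq' : 1 ≤ q') (hqq : q' ≤ q)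
    (hdet : (p:ℤ) * q' - p' * q = 1 ∨ (p:ℤ) * q' - p' * q = -1)
    {c : ℝ} (hc0 : 0 < c) (hc1 : c ≤ 1) :
    volume {x : ℝ | ∃ t : ℝ, t ∈ Set.Ioo 0 c ∧ Irrational t ∧
        x = ((p:ℝ) + p' * t) / ((q:ℝ) + q' * t)}
      = ENNReal.ofReal (c / (q * (q + q' * c))) := by
  set G : ℝ → ℝ := fun t => ((p:ℝ) + p' * t) / ((q:ℝ) + q' * t) with hG
  have hQ'1 : (1:ℝ) ≤ (q':ℝ) := by exact_mod_cast hq'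
  have hQ1 : (1:ℝ) ≤ (q:ℝ) := by exact_mod_cast le_trans hq' hqq
  have hden : ∀ t : ℝ, 0 ≤ t → 0 < (q:ℝ) + q' * t := by
    intro t ht
    nlinarith
  have hdiff : ∀ s t : ℝ, 0 ≤ s → 0 ≤ t →
      G t - G s = ((t - s) * ((p':ℝ) * q - p * q')) / (((q:ℝ) + q' * t) * ((q:ℝ) + q' * s)) := by
    intro s t hs ht
    rw [hG]
    have h1 := (hden s hs).ne'
    have h2 := (hden t ht).ne'
    field_simp
    ring
  have hcont : ContinuousOn G (Set.Icc 0 c) := by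
    apply ContinuousOn.div
    · exact (continuousOn_const.add (continuousOn_const.mul continuousOn_id))
    · exact (continuousOn_const.add (continuousOn_const.mul continuousOn_id))
    · exact fun t ht => (hden t ht.1).ne'
  have hrange : volume (Set.range ((↑) : ℚ → ℝ)) = 0 :=
    (Set.countable_range _).measure_zero _
  -- irrationality transfer from x to t
  have hirr_t : ∀ t : ℝ, t ∈ Set.Ioo 0 c → Irrational (G t) → Irrational t := by
    intro t ht hx
    by_contra hrat
    exact (by
      have := rat_mobius (p:ℚ) (p':ℚ) (q:ℚ) (q':ℚ) hrat
      push_cast at this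
      exact this hx : False)
  rcases hdet with hd | hd
  · -- determinant 1 : G decreasing
    have hdR : (p:ℝ) * q' - p' * q = 1 := by exact_mod_cast hd
    have hmono : ∀ s t : ℝ, 0 ≤ s → s < t → t ≤ 1 → G t < G s := by
      intro s t hs hst ht1
      have h := hdiff s t hs (le_trans hs hst.le)
      have hd1 : 0 < ((q:ℝ) + q' * t) * ((q:ℝ) + q' * s) :=
        mul_pos (hden t (le_trans hs hst.le)) (hden s hs)
      have : G t - G s < 0 := by
        rw [h]
        apply div_neg_of_neg_of_pos _ hd1
        nlinarith
      linarith
    have hseteq : {x : ℝ | ∃ t : ℝ, t ∈ Set.Ioo 0 c ∧ Irrational t ∧ x = G t}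
        = Set.Ioo (G c) (G 0) \ Set.range ((↑) : ℚ → ℝ) := by
      ext x
      constructor
      · rintro ⟨t, ⟨ht0, htc⟩, htirr, rfl⟩
        refine ⟨⟨hmono t c ht0.le htc hc1, hmono 0 t le_rfl ht0 (le_trans htc.le hc1)⟩, ?_⟩
        exact irr_G p p' q q' (Or.inl hd) htirr (hden t ht0.le).ne'
      · rintro ⟨hxIoo, hxirr⟩
        obtain ⟨t, htIoo, hGt⟩ := intermediate_value_Ioo' hc0.le hcont hxIoo
        exact ⟨t, htIoo, hirr_t t htIoo (hGt.symm ▸ hxirr), hGt.symm⟩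
    rw [hseteq, measure_diff_null hrange, Real.volume_Ioo]
    congr 1
    have h := hdiff c 0 hc0.le le_rfl
    have : G 0 - G c = c / ((q:ℝ) * ((q:ℝ) + q' * c)) := by
      rw [h]
      rw [div_eq_div_iff (by nlinarith [hden c hc0.le]) (by nlinarith [hden c hc0.le])]
      linear_combination (c * (q:ℝ) * ((q:ℝ) + q' * c)) * hdR
    linarith
  · -- determinant -1 : G increasing
    have hdR : (p:ℝ) * q' - p' * q = -1 := by exact_mod_cast hd
    have hmono : ∀ s t : ℝ, 0 ≤ s → s < t → t ≤ 1 → G s < G t := by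
      intro s t hs hst ht1
      have h := hdiff s t hs (le_trans hs hst.le)
      have hd1 : 0 < ((q:ℝ) + q' * t) * ((q:ℝ) + q' * s) :=
        mul_pos (hden t (le_trans hs hst.le)) (hden s hs)
      have : 0 < G t - G s := by
        rw [h]
        apply div_pos _ hd1
        nlinarith
      linarith
    have hseteq : {x : ℝ | ∃ t : ℝ, t ∈ Set.Ioo 0 c ∧ Irrational t ∧ x = G t}
        = Set.Ioo (G 0) (G c) \ Set.range ((↑) : ℚ → ℝ) := by
      ext x
      constructor
      · rintro ⟨t, ⟨ht0, htc⟩, htirr, rfl⟩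
        refine ⟨⟨hmono 0 t le_rfl ht0 (le_trans htc.le hc1), hmono t c ht0.le htc hc1⟩, ?_⟩
        exact irr_G p p' q q' (Or.inr hd) htirr (hden t ht0.le).ne'
      · rintro ⟨hxIoo, hxirr⟩
        obtain ⟨t, htIoo, hGt⟩ := intermediate_value_Ioo hc0.le hcont hxIoo
        exact ⟨t, htIoo, hirr_t t htIoo (hGt.symm ▸ hxirr), hGt.symm⟩
    rw [hseteq, measure_diff_null hrange, Real.volume_Ioo]
    congr 1
    have h := hdiff 0 c le_rfl hc0.le
    have : G c - G 0 = c / ((q:ℝ) * ((q:ℝ) + q' * c)) := by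
      rw [h]
      rw [div_eq_div_iff (by nlinarith [hden c hc0.le]) (by nlinarith [hden c hc0.le])]
      linear_combination (-(c * (q:ℝ) * ((q:ℝ) + q' * c))) * hdR
    linarith

theorem stmt3 (n : ℕ) (hn : 1 ≤ n) (k : ℕ → ℕ) (hk : ∀ j, 1 ≤ j → j ≤ n → 1 ≤ k j)
    (N : ℕ) :
    (volume (cyl n k)).toReal / (3 * ((N : ℝ) + 2))
      < (volume {x : ℝ | x ∈ cyl n k ∧ N + 1 ≤ cfCoeff x (n + 1)}).toReal := by
  obtain ⟨p, p', q, q', hq'1, hqq, hpp, hdet, hfwd, hbwd⟩ := cyl_struct n hn k hk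
  have hN1 : (0:ℝ) < (N:ℝ) + 1 := by positivity
  set c : ℝ := 1 / ((N:ℝ) + 1) with hc
  have hc0 : 0 < c := by rw [hc]; positivity
  have hc1 : c ≤ 1 := by rw [hc, div_le_one hN1]; linarith
  have hcyl_eq : cyl n k = {x : ℝ | ∃ t : ℝ, t ∈ Set.Ioo 0 1 ∧ Irrational t ∧
      x = ((p:ℝ) + p' * t) / ((q:ℝ) + q' * t)} := by
    ext x
    constructor
    · intro hx
      obtain ⟨t, ht, htirr, _, hxe⟩ := hbwd x hx
      exact ⟨t, ht, htirr, hxe⟩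
    · rintro ⟨t, ht, htirr, rfl⟩
      exact (hfwd t ht htirr).1
  have hcfc : ∀ x t : ℝ, gaussMap^[n] x = t → cfCoeff x (n + 1) = ⌊t⁻¹⌋₊ := by
    intro x t h
    simp only [cfCoeff, Nat.add_sub_cancel, h]
  have hsub_eq : {x : ℝ | x ∈ cyl n k ∧ N + 1 ≤ cfCoeff x (n + 1)}
      = {x : ℝ | ∃ t : ℝ, t ∈ Set.Ioo 0 c ∧ Irrational t ∧
        x = ((p:ℝ) + p' * t) / ((q:ℝ) + q' * t)} := by
    ext x
    constructor
    · rintro ⟨hx, hN⟩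
      obtain ⟨t, ht, htirr, hgt, hxe⟩ := hbwd x hx
      rw [hcfc x t hgt] at hN
      have ht0 := ht.1
      have hle : ((N:ℝ) + 1) ≤ t⁻¹ := by
        have := (Nat.le_floor_iff (by positivity : (0:ℝ) ≤ t⁻¹)).mp hN
        push_cast at this
        linarith
      have htle : t ≤ c := by
        have h3 := mul_le_mul_of_nonneg_left hle ht0.le
        rw [mul_inv_cancel₀ ht0.ne'] at h3
        rw [hc, le_div_iff₀ hN1]
        linarith
      have htne : t ≠ c := by
        intro h
        exact htirr ⟨1 / ((N:ℚ) + 1), by rw [h, hc]; push_cast; ring⟩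
      exact ⟨t, ⟨ht0, lt_of_le_of_ne htle htne⟩, htirr, hxe⟩
    · rintro ⟨t, ⟨ht0, htc⟩, htirr, rfl⟩
      have ht1 : t < 1 := lt_of_lt_of_le htc hc1
      obtain ⟨hmem, hgt⟩ := hfwd t ⟨ht0, ht1⟩ htirr
      refine ⟨hmem, ?_⟩
      rw [hcfc _ t hgt]
      apply Nat.le_floor
      have htc' : t * ((N:ℝ) + 1) < 1 := by
        rw [hc, lt_div_iff₀ hN1] at htc
        linarith
      have h3 : t * ((N:ℝ) + 1) < t * t⁻¹ := by
        rw [mul_inv_cancel₀ ht0.ne']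
        exact htc'
      have h4 := lt_of_mul_lt_mul_left h3 ht0.le
      push_cast
      linarith
  rw [hsub_eq, hcyl_eq, vol_image p p' q q' hq'1 hqq hdet one_pos le_rfl,
    vol_image p p' q q' hq'1 hqq hdet hc0 hc1]
  have hq'R : (1:ℝ) ≤ (q':ℝ) := by exact_mod_cast hq'1
  have hqR : (1:ℝ) ≤ (q:ℝ) := by exact_mod_cast le_trans hq'1 hqq
  have hqqR : (q':ℝ) ≤ (q:ℝ) := by exact_mod_cast hqq
  have hN0 : (0:ℝ) ≤ (N:ℝ) := Nat.cast_nonneg N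
  have hq'c : (0:ℝ) ≤ (q':ℝ) * c := mul_nonneg (by linarith) hc0.le
  have hA : (0:ℝ) < (q:ℝ) * ((q:ℝ) + q' * 1) := by nlinarith
  have hB : (0:ℝ) < (q:ℝ) * ((q:ℝ) + q' * c) := by nlinarith
  rw [ENNReal.toReal_ofReal (le_of_lt (div_pos one_pos hA)),
    ENNReal.toReal_ofReal (le_of_lt (div_pos hc0 hB))]
  have hC : (0:ℝ) < (q:ℝ) * (((N:ℝ) + 1) * q + q') := by nlinarith [mul_nonneg hN0 (by linarith : (0:ℝ) ≤ (q:ℝ)), mul_nonneg (mul_nonneg hN0 (by linarith : (0:ℝ) ≤ (q:ℝ))) (by linarith : (0:ℝ) ≤ (q:ℝ))]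
  have hcN : c * ((N:ℝ) + 1) = 1 := by
    rw [hc]; field_simp
  have hrhs : c / ((q:ℝ) * ((q:ℝ) + q' * c)) = 1 / ((q:ℝ) * (((N:ℝ) + 1) * q + q')) := by
    rw [div_eq_div_iff hB.ne' hC.ne']
    linear_combination ((q:ℝ) * (q:ℝ)) * hcN
  have hD : (0:ℝ) < (q:ℝ) * ((q:ℝ) + q' * 1) * (3 * ((N:ℝ) + 2)) := by nlinarith [mul_pos hA (show (0:ℝ) < 3 * ((N:ℝ) + 2) by linarith)]
  rw [div_div, hrhs, div_lt_div_iff₀ hD hC]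
  nlinarith [mul_pos (show (0:ℝ) < (q:ℝ) by linarith) (show (0:ℝ) < (q':ℝ) by linarith),
    mul_nonneg (mul_nonneg hN0 (by linarith : (0:ℝ) ≤ (q:ℝ))) (by linarith : (0:ℝ) ≤ (q:ℝ)),
    mul_nonneg (mul_nonneg hN0 (by linarith : (0:ℝ) ≤ (q:ℝ))) (by linarith : (0:ℝ) ≤ (q':ℝ))]
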